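/- For all p, q ∈ ℤ, the real part of R(e^{πi/3}; p, q) equals (2p − 2q − 1)·π²/12. -/

import Mathlib

/-!
Formalization of a statement from "Extended Bloch group and the
Cheeger–Chern–Simons class" by W. D. Neumann.
-/

noncomputable section
open scoped Classical
open Complex

namespace ExtendedBloch

/-- The Rogers dilogarithm `𝓡(z) = ½ Log z · Log(1-z) - ∫₀¹ Log(1 - tz)/t dt`. -/
def rogers (z : ℂ) : ℂ :=
  (1 / 2) * Complex.log z * Complex.log (1 - z)
    - ∫ t in (0 : ℝ)..1, Complex.log (1 - (t : ℂ) * z) / (t : ℂ)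

/-- `R(z; p, q) = 𝓡(z) + (πi/2)(p Log(1-z) + q Log z) - π²/6`. -/
def RFun (z : ℂ) (p q : ℤ) : ℂ :=
  rogers z
    + ((Real.pi : ℂ) * Complex.I / 2) *
        ((p : ℂ) * Complex.log (1 - z) + (q : ℂ) * Complex.log z)
    - (Real.pi : ℂ) ^ 2 / 6

open Real MeasureTheory intervalIntegral

/-! ### Auxiliary lemmas -/

lemma hasSum_even : HasSum (fun n : ℕ => if Even n then 2 / (n:ℝ)^2 else 0) (π^2/12) := by
  have hinj : Function.Injective (fun k : ℕ => 2 * k) :=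
    fun a b h => by simpa using h
  have h0 : ∀ x ∉ Set.range (fun k : ℕ => 2 * k),
      (if Even x then 2 / (x:ℝ)^2 else 0) = 0 := by
    intro x hx
    rw [if_neg]
    rintro ⟨k, hk⟩
    exact hx ⟨k, by show 2*k = x; omega⟩
  rw [← hinj.hasSum_iff h0]
  have h := hasSum_zeta_two.mul_left (1/2 : ℝ)
  convert h using 1
  · rfl
  · funext k
    simp only [Function.comp]
    rw [if_pos ⟨k, two_mul k⟩]
    push_cast
    rcases eq_or_ne (k:ℝ) 0 with h | h
    · simp [h]
    · field_simp
  · ring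

lemma hasSum_alt : HasSum (fun n : ℕ => (-1:ℝ)^n / ((n:ℝ)+1)^2) (π^2/12) := by
  have h1 : HasSum (fun n : ℕ => (1:ℝ)/(n:ℝ)^2 - (if Even n then 2 / (n:ℝ)^2 else 0))
      (π^2/6 - π^2/12) := hasSum_zeta_two.sub hasSum_even
  have h2 : HasSum (fun n : ℕ => (-1:ℝ)^(n+1)/(n:ℝ)^2) (π^2/12) := by
    convert h1 using 1
    · funext n
      rcases Nat.even_or_odd n with h | h
      · rw [if_pos h, Odd.neg_one_pow (Even.add_one h)]
        ring
      · rw [if_neg (Nat.not_even_iff_odd.2 h), Even.neg_one_pow (Odd.add_one h)]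
        ring
    · ring
  have h3 := (hasSum_nat_add_iff' (f := fun n : ℕ => (-1:ℝ)^(n+1)/(n:ℝ)^2) 1).2 h2
  simp only [Finset.range_one, Finset.sum_singleton, Nat.cast_zero] at h3
  convert h3 using 1
  · rfl
  · funext n
    push_cast
    rw [show n+1+1 = n+2 from rfl, pow_add]
    norm_num
  · norm_num

lemma hasSum_final : HasSum (fun n : ℕ => -((-1:ℝ)^n / (3 * ((n:ℝ)+1)^2))) (-(π^2/36)) := by
  have := hasSum_alt.mul_left (-(1/3) : ℝ)
  convert this using 1
  · rfl
  · funext n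
    have h : ((n:ℝ)+1)^2 ≠ 0 := by positivity
    field_simp
  · ring

lemma omega_eq : Complex.exp ((Real.pi : ℂ) * Complex.I / 3)
    = ((1/2 : ℝ) : ℂ) + ((Real.sqrt 3 / 2 : ℝ) : ℂ) * Complex.I := by
  rw [show (Real.pi : ℂ) * Complex.I / 3 = ((Real.pi/3 : ℝ) : ℂ) * Complex.I by push_cast; ring,
    Complex.exp_mul_I, ← Complex.ofReal_cos, ← Complex.ofReal_sin,
    Real.cos_pi_div_three, Real.sin_pi_div_three]

lemma re_omega (t : ℝ) : (1 - (t:ℂ) * Complex.exp ((Real.pi : ℂ) * Complex.I / 3)).re = 1 - t/2 := by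
  rw [omega_eq]
  simp
  ring

lemma im_omega (t : ℝ) :
    (1 - (t:ℂ) * Complex.exp ((Real.pi : ℂ) * Complex.I / 3)).im = -(t * (Real.sqrt 3 / 2)) := by
  rw [omega_eq]
  simp

lemma normSq_omega (t : ℝ) :
    Complex.normSq (1 - (t:ℂ) * Complex.exp ((Real.pi : ℂ) * Complex.I / 3)) = 1 - t + t^2 := by
  rw [Complex.normSq_apply, re_omega t, im_omega t]
  have h3 : Real.sqrt 3 ^ 2 = 3 := Real.sq_sqrt (by norm_num)
  nlinarith [h3]

lemma intInt : IntervalIntegrable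
    (fun t : ℝ => Complex.log (1 - (t:ℂ) * Complex.exp ((Real.pi : ℂ) * Complex.I / 3)) / (t:ℂ))
    volume 0 1 := by
  set ω := Complex.exp ((Real.pi : ℂ) * Complex.I / 3) with hω
  rw [intervalIntegrable_iff_integrableOn_Ioc_of_le zero_le_one]
  have hcont : ContinuousOn
      (fun t : ℝ => Complex.log (1 - (t:ℂ) * ω) / (t:ℂ)) (Set.Ioc 0 1) := by
    intro t ht
    have h1 : ContinuousAt (fun t : ℝ => Complex.log (1 - (t:ℂ) * ω)) t := by
      apply ContinuousAt.comp (g := Complex.log)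
      · apply continuousAt_clog
        rw [Complex.mem_slitPlane_iff]
        left
        rw [re_omega]
        linarith [ht.2]
      · fun_prop
    exact (h1.div (Complex.continuous_ofReal.continuousAt)
      (by exact_mod_cast ne_of_gt ht.1)).continuousWithinAt
  refine Integrable.mono' (g := fun _ : ℝ => (5:ℝ))
    (integrableOn_const (by simp) (by simp)) (hcont.aestronglyMeasurable measurableSet_Ioc) ?_
  filter_upwards [ae_restrict_mem measurableSet_Ioc] with t ht
  obtain ⟨ht0, ht1⟩ := ht
  set u : ℂ := 1 - (t:ℂ) * ω with hu
  have hre : u.re = 1 - t/2 := re_omega t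
  have him : u.im = -(t * (Real.sqrt 3 / 2)) := im_omega t
  have hy1 : (3:ℝ)/4 ≤ 1 - t + t^2 := by nlinarith [sq_nonneg (t - 1/2)]
  have hy2 : 1 - t + t^2 ≤ 1 := by nlinarith
  have hy0 : (0:ℝ) < 1 - t + t^2 := by nlinarith
  -- bound on the real part of the log
  have hlogre : |(Complex.log u).re| ≤ (2/3) * t := by
    rw [Complex.log_re, Complex.norm_def, normSq_omega t, Real.log_sqrt hy0.le]
    have hlogle : Real.log (1 - t + t^2) ≤ 0 := Real.log_nonpos hy0.le hy2
    have hinv : (1 - t + t^2)⁻¹ ≤ 4/3 := by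
      rw [show (4:ℝ)/3 = ((3:ℝ)/4)⁻¹ by norm_num]
      exact inv_anti₀ (by norm_num) hy1
    have hlb := Real.log_le_sub_one_of_pos (inv_pos.2 hy0)
    rw [Real.log_inv] at hlb
    have hub : (1 - t + t^2)⁻¹ - 1 ≤ (4/3) * t := by
      have h1y : (0:ℝ) ≤ 1 - (1-t+t^2) := by nlinarith
      have heq : (1-t+t^2)⁻¹ - 1 = (1 - (1-t+t^2)) * (1-t+t^2)⁻¹ := by
        field_simp
      rw [heq]
      calc (1 - (1-t+t^2)) * (1-t+t^2)⁻¹ ≤ (1 - (1-t+t^2)) * (4/3) :=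
            mul_le_mul_of_nonneg_left hinv h1y
        _ ≤ (4/3) * t := by nlinarith
    rw [abs_div, abs_of_nonpos hlogle, abs_of_pos (by norm_num : (0:ℝ) < 2)]
    have : -Real.log (1 - t + t^2) ≤ (4/3) * t := by linarith
    linarith
  -- bound on the imaginary part of the log (the argument)
  have hargneg : Complex.arg u < 0 := Complex.arg_neg_iff.2 (by rw [him]; nlinarith [Real.sqrt_pos.2 (show (0:ℝ) < 3 by norm_num)])
  have harg_ge : -(Real.pi/2) ≤ Complex.arg u :=
    Complex.neg_pi_div_two_le_arg_iff.2 (Or.inl (by rw [hre]; linarith))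
  have habs_ge : (1:ℝ)/2 ≤ ‖u‖ := by
    calc (1:ℝ)/2 ≤ |u.re| := by rw [hre, abs_of_pos (by linarith)]; linarith
    _ ≤ ‖u‖ := Complex.abs_re_le_norm u
  have hsin := Real.mul_le_sin (x := -Complex.arg u) (by linarith) (by linarith)
  rw [Real.sin_neg, Complex.sin_arg, him] at hsin
  have h3le : Real.sqrt 3 ≤ 2 := by
    nlinarith [Real.sq_sqrt (show (0:ℝ) ≤ 3 by norm_num), Real.sqrt_nonneg 3]
  have habspos : (0:ℝ) < ‖u‖ := by linarith
  have hsin2 : -(u.im / ‖u‖) ≤ 2 * t := by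
    rw [him]
    rw [neg_div, neg_neg, div_le_iff₀ habspos]
    calc t * (Real.sqrt 3 / 2) ≤ t * 1 := by
          exact mul_le_mul_of_nonneg_left (by linarith) ht0.le
      _ ≤ (2*t) * (1/2) := le_of_eq (by ring)
      _ ≤ (2*t) * ‖u‖ := by
          apply mul_le_mul_of_nonneg_left habs_ge (by linarith)
  rw [him] at hsin2
  have h1 : 2/Real.pi * (-u.arg) ≤ 2*t := hsin.trans hsin2
  have hpigt : (3:ℝ) < Real.pi := Real.pi_gt_three
  have him_le : |(Complex.log u).im| ≤ 4 * t := by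
    rw [Complex.log_im, abs_of_neg hargneg]
    have hle : -u.arg ≤ Real.pi * t := by
      rw [div_mul_eq_mul_div, div_le_iff₀ (by linarith : (0:ℝ) < Real.pi)] at h1
      nlinarith [Real.pi_le_four]
    nlinarith [Real.pi_le_four]
  have habs_log : ‖Complex.log u‖ ≤ 5 * t := by
    refine le_trans (Complex.norm_le_abs_re_add_abs_im _) ?_
    linarith
  show ‖Complex.log u / (t:ℂ)‖ ≤ 5
  rw [norm_div, Complex.norm_real, Real.norm_eq_abs, abs_of_pos ht0,
    div_le_iff₀ ht0]
  linarith

lemma log_omega : Complex.log (Complex.exp ((Real.pi : ℂ) * Complex.I / 3))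
    = (Real.pi : ℂ) * Complex.I / 3 := by
  rw [Complex.log_exp] <;> simp <;> nlinarith [Real.pi_pos]

lemma one_sub_omega : 1 - Complex.exp ((Real.pi : ℂ) * Complex.I / 3)
    = Complex.exp (-((Real.pi : ℂ) * Complex.I / 3)) := by
  rw [omega_eq, show -((Real.pi : ℂ) * Complex.I / 3) = ((-(Real.pi/3) : ℝ) : ℂ) * Complex.I by push_cast; ring,
    Complex.exp_mul_I, ← Complex.ofReal_cos, ← Complex.ofReal_sin,
    Real.cos_neg, Real.sin_neg, Real.cos_pi_div_three, Real.sin_pi_div_three]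
  push_cast
  ring

lemma log_one_sub_omega : Complex.log (1 - Complex.exp ((Real.pi : ℂ) * Complex.I / 3))
    = -((Real.pi : ℂ) * Complex.I / 3) := by
  rw [one_sub_omega, Complex.log_exp] <;> simp <;> nlinarith [Real.pi_pos]

lemma re_formula {t : ℝ} (ht : 0 < t) :
    (Complex.log (1 - (t:ℂ) * Complex.exp ((Real.pi : ℂ) * Complex.I / 3)) / (t:ℂ)).re
      = Real.log (1 - t + t^2) / (2*t) := by
  rw [Complex.div_ofReal_re, Complex.log_re, Complex.norm_def]
  have hsq : Complex.normSq (1 - (t:ℂ) * Complex.exp ((Real.pi : ℂ) * Complex.I / 3))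
      = 1 - t + t^2 := by
    rw [omega_eq, Complex.normSq_apply]
    simp only [Complex.sub_re, Complex.sub_im, Complex.one_re, Complex.one_im, Complex.mul_re,
      Complex.mul_im, Complex.ofReal_re, Complex.ofReal_im, Complex.add_re, Complex.add_im,
      Complex.I_re, Complex.I_im]
    have h3 : Real.sqrt 3 ^ 2 = 3 := Real.sq_sqrt (by norm_num)
    nlinarith [h3]
  rw [hsq, Real.log_sqrt (by nlinarith)]
  ring

lemma ae_ne_one : ∀ᵐ t : ℝ ∂volume, t ≠ 1 := by
  rw [Filter.eventually_iff, mem_ae_iff]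
  have : {x : ℝ | x ≠ 1}ᶜ = {1} := by ext x; simp
  rw [this]
  exact measure_singleton 1

-- partial: hasSum limit at a point

lemma hasSum_F {t : ℝ} (ht0 : 0 < t) (ht1 : t < 1) :
    HasSum (fun n : ℕ => (-1:ℝ)^n * (t^(3*n+2) - t^n) / (2*((n:ℝ)+1)))
      (Real.log (1 - t + t^2) / (2*t)) := by
  have hA := Real.hasSum_pow_div_log_of_abs_lt_one
    (x := -t) (by rw [abs_neg, abs_of_pos ht0]; exact ht1)
  have hB := Real.hasSum_pow_div_log_of_abs_lt_one
    (x := -t^3) (by rw [abs_neg, abs_of_pos (by positivity)]; exact pow_lt_one₀ ht0.le ht1 (by norm_num))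
  have hC := (hA.sub hB).mul_left (1/(2*t))
  have hfun : (fun n : ℕ => (1/(2*t)) * ((-t)^(n+1)/((n:ℝ)+1) - (-t^3)^(n+1)/((n:ℝ)+1)))
      = fun n : ℕ => (-1:ℝ)^n * (t^(3*n+2) - t^n) / (2*((n:ℝ)+1)) := by
    funext n
    rw [show (-t^3 : ℝ) = (-1) * t^3 by ring, show (-t : ℝ) = (-1) * t by ring,
      mul_pow, mul_pow, ← pow_mul]
    rw [pow_succ (-1:ℝ) n]
    have hne : (t:ℝ) ≠ 0 := ne_of_gt ht0
    have hne2 : ((n:ℝ)+1) ≠ 0 := by positivity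
    field_simp
    ring
  have hval : (1/(2*t)) * (-Real.log (1 - -t) - -Real.log (1 - -t^3))
      = Real.log (1 - t + t^2) / (2*t) := by
    have h1 : (1:ℝ) - -t^3 = (1+t) * (1-t+t^2) := by ring
    have h2 : (1:ℝ) - -t = 1 + t := by ring
    rw [h1, h2, Real.log_mul (by nlinarith) (by nlinarith)]
    ring
  rw [hfun, hval] at hC
  exact hC

lemma integral_F (n : ℕ) :
    (∫ t in (0:ℝ)..1, (-1:ℝ)^n * (t^(3*n+2) - t^n) / (2*((n:ℝ)+1)))
      = -((-1:ℝ)^n / (3 * ((n:ℝ)+1)^2)) := by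
  have h : (fun t : ℝ => (-1:ℝ)^n * (t^(3*n+2) - t^n) / (2*((n:ℝ)+1)))
      = fun t : ℝ => ((-1:ℝ)^n / (2*((n:ℝ)+1))) * (t^(3*n+2) - t^n) := by
    funext t; ring
  rw [h, intervalIntegral.integral_const_mul,
    intervalIntegral.integral_sub (intervalIntegral.intervalIntegrable_pow _)
      (intervalIntegral.intervalIntegrable_pow _),
    integral_pow, integral_pow]
  have h1 : ((n:ℝ)+1) ≠ 0 := by positivity
  have h2 : ((3*n+2:ℕ):ℝ)+1 ≠ 0 := by positivity
  push_cast
  field_simp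
  ring

lemma hasSum_integrals :
    HasSum (fun n : ℕ => ∫ t in (0:ℝ)..1, (-1:ℝ)^n * (t^(3*n+2) - t^n) / (2*((n:ℝ)+1)))
      (∫ t in (0:ℝ)..1,
        (Complex.log (1 - (t:ℂ) * Complex.exp ((Real.pi : ℂ) * Complex.I / 3)) / (t:ℂ)).re) := by
  have huIoc : Set.uIoc (0:ℝ) 1 = Set.Ioc 0 1 := Set.uIoc_of_le zero_le_one
  apply intervalIntegral.hasSum_integral_of_dominated_convergence
    (bound := fun (n : ℕ) (t : ℝ) => t^n * (1-t))
  · intro n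
    exact (Continuous.aestronglyMeasurable (by fun_prop)).restrict
  · intro n
    filter_upwards with t ht
    rw [huIoc] at ht
    obtain ⟨ht0, ht1⟩ := ht
    have hp32 : t^(3*n+2) ≤ t^n := pow_le_pow_of_le_one ht0.le ht1 (by omega)
    have habs : |(-1:ℝ)^n * (t^(3*n+2) - t^n) / (2*((n:ℝ)+1))|
        = (t^n - t^(3*n+2)) / (2*((n:ℝ)+1)) := by
      rw [abs_div, abs_mul, _root_.abs_pow, abs_neg, abs_one, one_pow, one_mul,
        abs_of_nonpos (by linarith), abs_of_pos (by positivity)]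
      ring
    rw [Real.norm_eq_abs, habs, div_le_iff₀ (by positivity)]
    have hb := one_add_mul_le_pow (a := t - 1) (by linarith) (2*n+2)
    rw [show (1:ℝ) + (t-1) = t by ring] at hb
    have hkey : t^(3*n+2) = t^n * t^(2*n+2) := by
      rw [← pow_add]; ring_nf
    have htn : (0:ℝ) ≤ t^n := by positivity
    have hb' : 1 - t^(2*n+2) ≤ (2*(n:ℝ)+2) * (1-t) := by
      push_cast at hb ⊢
      nlinarith [hb]
    calc t^n - t^(3*n+2) = t^n * (1 - t^(2*n+2)) := by rw [hkey]; ring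
      _ ≤ t^n * ((2*(n:ℝ)+2) * (1-t)) := by
          apply mul_le_mul_of_nonneg_left hb' htn
      _ = t^n * (1-t) * (2*((n:ℝ)+1)) := by ring
  · filter_upwards [ae_ne_one] with t htne ht
    rw [huIoc] at ht
    rcases eq_or_lt_of_le ht.2 with h | h
    · exact absurd h htne
    · exact (summable_geometric_of_lt_one ht.1.le h).mul_right _
  · rw [intervalIntegrable_iff_integrableOn_Ioc_of_le zero_le_one]
    have hconst : IntegrableOn (fun _ : ℝ => (1:ℝ)) (Set.Ioc 0 1) volume := by
      exact integrableOn_const (by simp) (by simp)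
    apply hconst.congr
    filter_upwards [ae_restrict_of_ae ae_ne_one,
      ae_restrict_mem measurableSet_Ioc] with t htne ht
    rcases eq_or_lt_of_le ht.2 with h | h
    · exact absurd h htne
    · rw [tsum_mul_right, tsum_geometric_of_lt_one ht.1.le h,
        inv_mul_cancel₀ (by linarith)]
  · filter_upwards [ae_ne_one] with t htne ht
    rw [huIoc] at ht
    rcases eq_or_lt_of_le ht.2 with h | h
    · exact absurd h htne
    · have := hasSum_F ht.1 h
      rwa [← re_formula ht.1] at this

/-- `Re R(e^{πi/3}; p, q) = (2p - 2q - 1) π²/12`. -/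
theorem RFun_omega_re (p q : ℤ) :
    (RFun (Complex.exp ((Real.pi : ℂ) * Complex.I / 3)) p q).re
      = (2 * (p : ℝ) - 2 * (q : ℝ) - 1) * Real.pi ^ 2 / 12 := by
  have hre : (∫ t in (0:ℝ)..1,
        Complex.log (1 - (t:ℂ) * Complex.exp ((Real.pi : ℂ) * Complex.I / 3)) / (t:ℂ)).re
      = ∫ t in (0:ℝ)..1,
        (Complex.log (1 - (t:ℂ) * Complex.exp ((Real.pi : ℂ) * Complex.I / 3)) / (t:ℂ)).re := by
    have h := Complex.reCLM.intervalIntegral_comp_comm intInt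
    simpa using h.symm
  have hval : (∫ t in (0:ℝ)..1,
        (Complex.log (1 - (t:ℂ) * Complex.exp ((Real.pi : ℂ) * Complex.I / 3)) / (t:ℂ)).re)
      = -(π^2/36) := by
    have h := hasSum_integrals
    rw [show (fun n : ℕ => ∫ t in (0:ℝ)..1, (-1:ℝ)^n * (t^(3*n+2) - t^n) / (2*((n:ℝ)+1)))
        = (fun n : ℕ => -((-1:ℝ)^n / (3 * ((n:ℝ)+1)^2))) from funext integral_F] at h
    exact h.unique hasSum_final
  unfold RFun rogers
  rw [log_omega, log_one_sub_omega]
  set J := ∫ t in (0:ℝ)..1,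
    Complex.log (1 - (t:ℂ) * Complex.exp ((Real.pi : ℂ) * Complex.I / 3)) / (t:ℂ) with hJ
  have hJre : J.re = -(π^2/36) := by rw [hJ, hre, hval]
  have hX : (1:ℂ)/2 * ((π:ℂ)*Complex.I/3) * (-((π:ℂ)*Complex.I/3)) - J
      + ((π:ℂ)*Complex.I/2) * ((p:ℂ) * (-((π:ℂ)*Complex.I/3)) + (q:ℂ)*((π:ℂ)*Complex.I/3))
      - (π:ℂ)^2/6
      = ((π^2/18 + π^2*((p:ℝ)-(q:ℝ))/6 - π^2/6 : ℝ) : ℂ) - J := by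
    push_cast
    linear_combination (-(π:ℂ)^2/18 + (π:ℂ)^2*((q:ℂ)-(p:ℂ))/6) * Complex.I_sq
  rw [hX, Complex.sub_re, Complex.ofReal_re, hJre]
  push_cast
  ring

end ExtendedBloch
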